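/- arXiv:0805.2322 — 2 statements merged into one kernel-verified Lean document; each statement's English description precedes it below -/
import Mathlib

section
/- Let X_1, ..., X_n be real random variables satisfying the PDS condition, with continuous marginal CDFs F_i, and let b_1 ≤ ... ≤ b_n be reals such that (1 − F_i(b_{n−j+1}))/j is nondecreasing in j = 1, ..., n for every i. Then P(X_{1:n} ≤ b_1, ..., X_{n:n} ≤ b_n) ≥ (1/n) Σ_{i=1}^n F_i(b_1). -/
open MeasureTheory

/-- `ordStat x i` is the `i`-th smallest value among `x 0, ..., x (n-1)`. -/
noncomputable def ordStat {n : ℕ} (x : Fin n → ℝ) : Fin n → ℝ :=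
  x ∘ Tuple.sort x

open Finset
open scoped ENNReal

set_option maxHeartbeats 1000000

lemma ordStat_le_iff' {n : ℕ} (x : Fin n → ℝ) (k : Fin n) (t : ℝ) :
    ordStat x k ≤ t ↔ (k : ℕ) + 1 ≤ (Finset.univ.filter (fun i => x i ≤ t)).card := by
  classical
  have h := Tuple.lt_card_le_iff_apply_le_of_monotone (f := x ∘ Tuple.sort x) (a := t)
    (Tuple.monotone_sort x) (j := k)
  rw [← Fintype.card_subtype] at h
  have hcard : Fintype.card {i // (x ∘ Tuple.sort x) i ≤ t} = Fintype.card {i // x i ≤ t} :=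
    Fintype.card_congr (Equiv.subtypeEquiv (Tuple.sort x) (fun i => Iff.rfl))
  rw [ordStat, ← h, hcard, Fintype.card_subtype]
  exact ⟨fun h => h, fun h => h⟩

lemma cheb_aux {Ω : Type*} [MeasurableSpace Ω] (μ : Measure Ω) [IsProbabilityMeasure μ]
    (Y : Ω → ℝ) (hY : Measurable Y) (E : Set Ω) (hE : MeasurableSet E)
    (h : ℝ → ℝ) (hh : Antitone h) (hint : Integrable (fun ω => h (Y ω)) μ)
    (hrep : ∀ s : ℝ, (μ (E ∩ {ω | s < Y ω})).toReal = ∫ ω in {ω | s < Y ω}, h (Y ω) ∂μ)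
    {s t : ℝ} (hst : s ≤ t) :
    (μ (E ∩ {ω | t < Y ω})).toReal * (μ {ω | s < Y ω}).toReal
      ≤ (μ (E ∩ {ω | s < Y ω})).toReal * (μ {ω | t < Y ω}).toReal := by
  have hBt : MeasurableSet {ω | t < Y ω} := measurableSet_lt measurable_const hY
  have hBs : MeasurableSet {ω | s < Y ω} := measurableSet_lt measurable_const hY
  have hsub : {ω | t < Y ω} ⊆ {ω | s < Y ω} := fun ω hω => lt_of_le_of_lt hst hω
  have hAmeas : MeasurableSet ({ω | s < Y ω} \ {ω | t < Y ω}) := hBs.diff hBt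
  have hdisj : Disjoint ({ω | s < Y ω} \ {ω | t < Y ω}) {ω | t < Y ω} := Set.disjoint_sdiff_left
  have hunion : ({ω | s < Y ω} \ {ω | t < Y ω}) ∪ {ω | t < Y ω} = {ω | s < Y ω} :=
    Set.diff_union_of_subset hsub
  have hmeasadd : (μ {ω | s < Y ω}).toReal
      = (μ ({ω | s < Y ω} \ {ω | t < Y ω})).toReal + (μ {ω | t < Y ω}).toReal := by
    nth_rewrite 1 [← hunion]
    rw [measure_union hdisj hBt,
      ENNReal.toReal_add (measure_ne_top μ _) (measure_ne_top μ _)]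
  have hIJ : ∫ ω in {ω | s < Y ω}, h (Y ω) ∂μ
      = (∫ ω in {ω | s < Y ω} \ {ω | t < Y ω}, h (Y ω) ∂μ)
        + ∫ ω in {ω | t < Y ω}, h (Y ω) ∂μ := by
    nth_rewrite 1 [← hunion]
    rw [setIntegral_union hdisj hBt hint.integrableOn hint.integrableOn]
  have hI : h t * (μ ({ω | s < Y ω} \ {ω | t < Y ω})).toReal
      ≤ ∫ ω in {ω | s < Y ω} \ {ω | t < Y ω}, h (Y ω) ∂μ := by
    have := setIntegral_mono_on (f := fun _ => h t) (g := fun ω => h (Y ω))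
      (integrableOn_const (measure_ne_top μ _)) hint.integrableOn hAmeas
      (fun ω hω => hh (le_of_not_gt hω.2))
    simpa [mul_comm, Measure.real] using this
  have hJ : ∫ ω in {ω | t < Y ω}, h (Y ω) ∂μ ≤ h t * (μ {ω | t < Y ω}).toReal := by
    have := setIntegral_mono_on (f := fun ω => h (Y ω)) (g := fun _ => h t)
      hint.integrableOn (integrableOn_const (measure_ne_top μ _)) hBt
      (fun ω hω => hh (le_of_lt hω))
    simpa [mul_comm, Measure.real] using this
  have e1 := hrep s
  have e2 := hrep t
  have hp : 0 ≤ (μ ({ω | s < Y ω} \ {ω | t < Y ω})).toReal := ENNReal.toReal_nonneg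
  have hq : 0 ≤ (μ {ω | t < Y ω}).toReal := ENNReal.toReal_nonneg
  rw [e1, e2, hIJ, hmeasadd]
  nlinarith [mul_le_mul_of_nonneg_right hJ hp, mul_le_mul_of_nonneg_right hI hq]

lemma rep_aux {Ω : Type*} [MeasurableSpace Ω] {μ : Measure Ω} [IsProbabilityMeasure μ]
    {Y : Ω → ℝ} (hY : Measurable Y) {f : Ω → ℝ} (hf : Integrable f μ) {g : ℝ → ℝ}
    (hae : μ[f | MeasurableSpace.comap Y inferInstance] =ᵐ[μ] fun ω => g (Y ω)) (s : ℝ) :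
    ∫ ω in {ω | s < Y ω}, f ω ∂μ = ∫ ω in {ω | s < Y ω}, g (Y ω) ∂μ := by
  have hm : MeasurableSpace.comap Y inferInstance ≤ _ := hY.comap_le
  have hs : MeasurableSet[MeasurableSpace.comap Y inferInstance] {ω | s < Y ω} :=
    ⟨Set.Ioi s, measurableSet_Ioi, rfl⟩
  have hsm : MeasurableSet {ω | s < Y ω} := measurableSet_lt measurable_const hY
  rw [← setIntegral_condExp hm hf hs]
  exact setIntegral_congr_ae hsm (hae.mono fun ω hω _ => hω)

/-- The lower-tail Simes inequality (1.3) under the PDS condition: if for each `i`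
and every bounded coordinatewise nondecreasing `φ` the conditional expectation
`E[φ(X_1, ..., X_n) | X_i]` is a nondecreasing function of `X_i`, the marginal CDFs
`F_i` are continuous, and `b_1 ≤ ⋯ ≤ b_n` satisfy `(1 − F_i(b_{n−j+1}))/j`
nondecreasing in `j = 1, ..., n` for each `i`, then
`P(X_{1:n} ≤ b_1, ..., X_{n:n} ≤ b_n) ≥ (1/n) Σ_i F_i(b_1)`. -/
theorem simes_inequality_PDS_lower
    {Ω : Type*} [MeasurableSpace Ω] {μ : Measure Ω} [IsProbabilityMeasure μ]
    {n : ℕ} (hn : 0 < n) (X : Fin n → Ω → ℝ) (hmeas : ∀ i, Measurable (X i))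
    (hPDS : ∀ (i : Fin n) (φ : (Fin n → ℝ) → ℝ), Monotone φ →
      (∃ M, ∀ x, |φ x| ≤ M) →
      ∃ g : ℝ → ℝ, Monotone g ∧
        μ[(fun ω => φ (fun j => X j ω)) |
            MeasurableSpace.comap (X i) (inferInstance : MeasurableSpace ℝ)]
          =ᵐ[μ] fun ω => g (X i ω))
    (F : Fin n → ℝ → ℝ)
    (hcdf : ∀ i (t : ℝ), (μ {ω | X i ω ≤ t}).toReal = F i t)
    (hcont : ∀ i, Continuous (F i))
    (b : Fin n → ℝ) (hb : Monotone b)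
    (hratio : ∀ (i : Fin n) (j j' : Fin n), j ≤ j' →
      (1 - F i (b ⟨n - 1 - (j : ℕ), by omega⟩)) / ((j : ℕ) + 1)
        ≤ (1 - F i (b ⟨n - 1 - (j' : ℕ), by omega⟩)) / ((j' : ℕ) + 1)) :
    (1 / (n : ℝ)) * ∑ i, F i (b ⟨0, hn⟩)
      ≤ (μ {ω | ∀ i : Fin n, ordStat (fun j => X j ω) i ≤ b i}).toReal := by
  classical
  -- thresholds
  set c : ℕ → ℝ := fun m => b ⟨n - min (max m 1) n, by omega⟩ with hc
  have hcmono : ∀ {m m' : ℕ}, m ≤ m' → c m' ≤ c m := by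
    intro m m' h
    exact hb (by simp only [Fin.mk_le_mk]; omega)
  have hceq : ∀ m, 1 ≤ m → m ≤ n → ∀ (h : n - m < n), c m = b ⟨n - m, h⟩ := by
    intro m h1 h2 h
    simp only [hc]
    congr 1
    exact Fin.ext (by simp; omega)
  -- counting function and events
  set N : ℕ → Ω → ℕ := fun m ω => (Finset.univ.filter fun i => c m < X i ω).card with hN
  set E : ℕ → Set Ω := fun k => {ω | ∀ m, k < m → m ≤ n → N m ω < m} with hE
  have hNmeas : ∀ m, Measurable (N m) := by
    intro m
    have : N m = fun ω => ∑ i : Fin n, if c m < X i ω then 1 else 0 := by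
      funext ω; rw [hN]; exact Finset.card_filter _ _
    rw [this]
    exact Finset.measurable_sum _ fun i _ =>
      Measurable.ite (measurableSet_lt measurable_const (hmeas i)) measurable_const
        measurable_const
  have hEmeas : ∀ k, MeasurableSet (E k) := by
    intro k
    have : E k = ⋂ m : ℕ, {ω | k < m → m ≤ n → N m ω < m} := by
      ext ω; simp [hE, Set.mem_iInter]
    rw [this]
    refine MeasurableSet.iInter fun m => ?_
    by_cases h1 : k < m
    · by_cases h2 : m ≤ n
      · have : {ω | k < m → m ≤ n → N m ω < m} = (N m) ⁻¹' (Set.Iio m) := by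
          ext ω; simp [h1, h2]
        rw [this]; exact hNmeas m measurableSet_Iio
      · have : {ω | k < m → m ≤ n → N m ω < m} = Set.univ := by
          ext ω; simp [h1, h2]
        rw [this]; exact MeasurableSet.univ
    · have : {ω | k < m → m ≤ n → N m ω < m} = Set.univ := by
        ext ω; simp [h1]
      rw [this]; exact MeasurableSet.univ
  have hNmono : ∀ {m m' : ℕ}, m ≤ m' → ∀ ω, N m ω ≤ N m' ω := by
    intro m m' h ω
    apply Finset.card_le_card
    intro i hi
    simp only [Finset.mem_filter, Finset.mem_univ, true_and] at hi ⊢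
    exact lt_of_le_of_lt (hcmono h) hi
  have hEmono : ∀ {k k' : ℕ}, k ≤ k' → E k ⊆ E k' := by
    intro k k' h ω hω m hm1 hm2
    exact hω m (lt_of_le_of_lt h hm1) hm2
  have hEn : E n = Set.univ := by
    ext ω; simp only [hE, Set.mem_setOf_eq, Set.mem_univ, iff_true]
    intro m h1 h2; omega
  -- identification of the target event
  have hsplit : ∀ (t : ℝ) (ω : Ω), (Finset.univ.filter fun i : Fin n => X i ω ≤ t).card
      + (Finset.univ.filter fun i : Fin n => t < X i ω).card = n := by
    intro t ω
    have hfe : (Finset.univ.filter fun i : Fin n => ¬ (X i ω ≤ t))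
        = Finset.univ.filter fun i : Fin n => t < X i ω := by
      apply Finset.filter_congr; intro i _; simp [not_le]
    rw [← hfe, Finset.card_filter_add_card_filter_not]
    simp
  have hE0 : {ω | ∀ i : Fin n, ordStat (fun j => X j ω) i ≤ b i} = E 0 := by
    ext ω
    simp only [Set.mem_setOf_eq, hE]
    constructor
    · intro hω m hm1 hm2
      have hlt : n - m < n := by omega
      have hk := hω ⟨n - m, hlt⟩
      rw [ordStat_le_iff'] at hk
      rw [← hceq m hm1 hm2 hlt] at hk
      have hs := hsplit (c m) ω
      have hNdef : N m ω = (Finset.univ.filter fun i => c m < X i ω).card := rfl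
      simp only [Fin.val_mk] at hk
      omega
    · intro hω k
      have hm1 : 1 ≤ n - (k:ℕ) := by omega
      have hm2 : n - (k:ℕ) ≤ n := by omega
      have h := hω (n - (k:ℕ)) (by omega) hm2
      rw [ordStat_le_iff']
      have hbc : c (n - (k:ℕ)) = b k := by
        rw [hceq _ hm1 hm2 (by omega)]
        congr 1
        exact Fin.ext (by simp; omega)
      have hNdef : N (n - (k:ℕ)) ω = (Finset.univ.filter fun i => c (n - (k:ℕ)) < X i ω).card := rfl
      rw [hbc] at hNdef
      have hs := hsplit (b k) ω
      omega
  -- exact count on increments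
  have hcount : ∀ m, 1 ≤ m → m ≤ n → ∀ ω, ω ∈ E m \ E (m-1) → N m ω = m := by
    intro m h1 h2 ω hω
    obtain ⟨hmem, hnot⟩ := hω
    simp only [hE, Set.mem_setOf_eq, not_forall] at hnot
    obtain ⟨m', hm1', hm2', hge⟩ := hnot
    push_neg at hge
    have hm'eq : m' = m := by
      by_contra hne
      have : m < m' := by omega
      exact absurd (hmem m' this hm2') (by omega)
    rw [hm'eq] at hge
    have hlow : m ≤ N m ω := hge
    have hcard : N m ω ≤ n := by
      simpa [hN] using (Finset.card_filter_le Finset.univ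
        (fun i => c m < X i ω)).trans_eq (by simp)
    by_contra hne
    have hgt : m + 1 ≤ N m ω := by omega
    have hmn : m < n := by
      rcases Nat.lt_or_ge m n with h | h
      · exact h
      · omega
    have := hmem (m+1) (by omega) (by omega)
    have := hNmono (show m ≤ m+1 by omega) ω
    omega
  -- sets and real quantities
  set S : Fin n → ℕ → Set Ω := fun i m => {ω | c m < X i ω} with hS
  have hSmeas : ∀ i m, MeasurableSet (S i m) :=
    fun i m => measurableSet_lt measurable_const (hmeas i)
  set P : Fin n → ℕ → ℕ → ℝ := fun i m k => (μ (E k ∩ S i m)).toReal with hP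
  set G : Fin n → ℕ → ℝ := fun i m => (μ (S i m)).toReal with hG
  set T : Fin n → ℕ → ℝ := fun i m => if m = 0 ∨ G i m = 0 then 0 else P i m m / G i m with hT
  have hGnn : ∀ i m, 0 ≤ G i m := fun i m => ENNReal.toReal_nonneg
  have hPnn : ∀ i m k, 0 ≤ P i m k := fun i m k => ENNReal.toReal_nonneg
  have hPleG : ∀ i m k, P i m k ≤ G i m := fun i m k =>
    ENNReal.toReal_mono (measure_ne_top μ _) (measure_mono Set.inter_subset_right)
  have hPmono : ∀ (i : Fin n) (m : ℕ) {k k' : ℕ}, k ≤ k' → P i m k ≤ P i m k' :=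
    fun i m k k' h => ENNReal.toReal_mono (measure_ne_top μ _)
      (measure_mono (Set.inter_subset_inter_left _ (hEmono h)))
  have hSmono : ∀ (i : Fin n) {m m' : ℕ}, m ≤ m' → S i m ⊆ S i m' := by
    intro i m m' h ω hω
    exact lt_of_le_of_lt (hcmono h) hω
  have hGmono : ∀ (i : Fin n) {m m' : ℕ}, m ≤ m' → G i m ≤ G i m' :=
    fun i m m' h => ENNReal.toReal_mono (measure_ne_top μ _) (measure_mono (hSmono i h))
  have hGF : ∀ i m, G i m = 1 - F i (c m) := by
    intro i m
    have hsc : S i m = {ω | X i ω ≤ c m}ᶜ := by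
      ext ω; simp [hS, not_le]
    have hms : MeasurableSet {ω | X i ω ≤ c m} := measurableSet_le (hmeas i) measurable_const
    rw [hG]
    simp only
    rw [hsc, measure_compl hms (measure_ne_top μ _), measure_univ,
      ENNReal.toReal_sub_of_le prob_le_one ENNReal.one_ne_top, ENNReal.toReal_one, hcdf]
  -- the PDS cross inequality
  have hcross : ∀ (i : Fin n) (k : ℕ) {m m' : ℕ}, m ≤ m' →
      P i m k * G i m' ≤ P i m' k * G i m := by
    intro i k m m' hmm'
    set φ : (Fin n → ℝ) → ℝ := fun x =>
      if ∀ m'', k < m'' → m'' ≤ n → (Finset.univ.filter fun j => c m'' < x j).card < m''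
      then (-1 : ℝ) else 0 with hφ
    have hφmono : Monotone φ := by
      intro x y hxy
      simp only [hφ]
      by_cases hy : ∀ m'', k < m'' → m'' ≤ n →
          (Finset.univ.filter fun j => c m'' < y j).card < m''
      · have hx : ∀ m'', k < m'' → m'' ≤ n →
            (Finset.univ.filter fun j => c m'' < x j).card < m'' := by
          intro m'' h1 h2
          refine lt_of_le_of_lt ?_ (hy m'' h1 h2)
          apply Finset.card_le_card
          intro j hj
          simp only [Finset.mem_filter, Finset.mem_univ, true_and] at hj ⊢
          exact lt_of_lt_of_le hj (hxy j)
        rw [if_pos hx, if_pos hy]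
      · rw [if_neg hy]
        by_cases hx : ∀ m'', k < m'' → m'' ≤ n →
            (Finset.univ.filter fun j => c m'' < x j).card < m''
        · rw [if_pos hx]; norm_num
        · rw [if_neg hx]
    have hφbd : ∃ M, ∀ x, |φ x| ≤ M := by
      refine ⟨1, fun x => ?_⟩
      simp only [hφ]
      split <;> norm_num
    obtain ⟨g, hg, haeq⟩ := hPDS i φ hφmono hφbd
    have hfeq : (fun ω => φ (fun j => X j ω))
        = fun ω => (E k).indicator (fun _ => (-1:ℝ)) ω := by
      funext ω
      by_cases hω : ω ∈ E k
      · rw [Set.indicator_of_mem hω]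
        have hω' : ∀ m'', k < m'' → m'' ≤ n →
            (Finset.univ.filter fun j => c m'' < X j ω).card < m'' := hω
        simp only [hφ]
        rw [if_pos hω']
      · rw [Set.indicator_of_notMem hω]
        have hω' : ¬ ∀ m'', k < m'' → m'' ≤ n →
            (Finset.univ.filter fun j => c m'' < X j ω).card < m'' := hω
        simp only [hφ]
        rw [if_neg hω']
    have hfint : Integrable (fun ω => φ (fun j => X j ω)) μ := by
      rw [hfeq]
      exact (integrable_const (-1 : ℝ)).indicator (hEmeas k)
    have hgint : Integrable (fun ω => g (X i ω)) μ := integrable_condExp.congr haeq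
    have hrep : ∀ s : ℝ, (μ (E k ∩ {ω | s < X i ω})).toReal
        = ∫ ω in {ω | s < X i ω}, -(g (X i ω)) ∂μ := by
      intro s
      have h1 : ∫ ω in {ω | s < X i ω}, φ (fun j => X j ω) ∂μ
          = ∫ ω in {ω | s < X i ω}, g (X i ω) ∂μ := rep_aux (hmeas i) hfint haeq s
      have h2 : ∫ ω in {ω | s < X i ω}, φ (fun j => X j ω) ∂μ
          = -(μ (E k ∩ {ω | s < X i ω})).toReal := by
        rw [hfeq, setIntegral_indicator (hEmeas k), setIntegral_const]
        simp [Set.inter_comm]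
        rfl
      rw [integral_neg, ← h1, h2, neg_neg]
    have hcheb := cheb_aux μ (X i) (hmeas i) (E k) (hEmeas k) (fun r => -(g r))
      (fun a b hab => neg_le_neg (hg hab)) hgint.neg hrep (hcmono hmm')
    simpa [hP, hG, hS] using hcheb
  -- step B : exact counting identity
  have hstepB : ∀ m, m < n →
      ((m+1:ℕ):ℝ) * ((μ (E (m+1))).toReal - (μ (E m)).toReal)
        = ∑ i : Fin n, (P i (m+1) (m+1) - P i (m+1) m) := by
    intro m hmn
    set A := E (m+1) \ E m with hA
    have hAmeas : MeasurableSet A := (hEmeas (m+1)).diff (hEmeas m)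
    have hsub : E m ⊆ E (m+1) := hEmono (Nat.le_succ m)
    have hu : E m ∪ A = E (m+1) := Set.union_diff_cancel hsub
    have hdisj : Disjoint (E m) A := Set.disjoint_sdiff_right
    have h1 : (μ (E (m+1))).toReal - (μ (E m)).toReal = (μ A).toReal := by
      have : μ (E m) + μ A = μ (E (m+1)) := by
        rw [← measure_union hdisj hAmeas, hu]
      have h2 := congrArg ENNReal.toReal this
      rw [ENNReal.toReal_add (measure_ne_top μ _) (measure_ne_top μ _)] at h2
      linarith
    have h2 : ∀ i : Fin n, P i (m+1) (m+1) - P i (m+1) m = (μ (A ∩ S i (m+1))).toReal := by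
      intro i
      have hu' : (E m ∩ S i (m+1)) ∪ (A ∩ S i (m+1)) = E (m+1) ∩ S i (m+1) := by
        rw [← Set.union_inter_distrib_right, hu]
      have hdisj' : Disjoint (E m ∩ S i (m+1)) (A ∩ S i (m+1)) :=
        hdisj.mono Set.inter_subset_left Set.inter_subset_left
      have : μ (E m ∩ S i (m+1)) + μ (A ∩ S i (m+1)) = μ (E (m+1) ∩ S i (m+1)) := by
        rw [← measure_union hdisj' (hAmeas.inter (hSmeas i (m+1))), hu']
      have h3 := congrArg ENNReal.toReal this
      rw [ENNReal.toReal_add (measure_ne_top μ _) (measure_ne_top μ _)] at h3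
      simp only [hP]
      linarith
    have hkey : ∑ i : Fin n, μ (A ∩ S i (m+1)) = ((m+1:ℕ) : ℝ≥0∞) * μ A := by
      have e1 : ∀ i : Fin n, μ (A ∩ S i (m+1))
          = ∫⁻ ω, (A ∩ S i (m+1)).indicator 1 ω ∂μ :=
        fun i => (lintegral_indicator_one (hAmeas.inter (hSmeas i (m+1)))).symm
      calc ∑ i : Fin n, μ (A ∩ S i (m+1))
          = ∑ i : Fin n, ∫⁻ ω, (A ∩ S i (m+1)).indicator 1 ω ∂μ :=
            Finset.sum_congr rfl (fun i _ => e1 i)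
        _ = ∫⁻ ω, ∑ i : Fin n, (A ∩ S i (m+1)).indicator 1 ω ∂μ :=
            (lintegral_finset_sum _ (fun i _ =>
              (measurable_const.indicator (hAmeas.inter (hSmeas i (m+1)))))).symm
        _ = ∫⁻ ω, A.indicator (fun _ => ((m+1:ℕ) : ℝ≥0∞)) ω ∂μ := by
            congr 1
            funext ω
            by_cases hω : ω ∈ A
            · rw [Set.indicator_of_mem hω]
              have hNm := hcount (m+1) (by omega) (by omega) ω hω
              have e2 : ∀ i : Fin n, (A ∩ S i (m+1)).indicator (1 : Ω → ℝ≥0∞) ω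
                  = if c (m+1) < X i ω then 1 else 0 := by
                intro i
                by_cases hi : c (m+1) < X i ω
                · rw [if_pos hi, Set.indicator_of_mem (Set.mem_inter hω hi)]; rfl
                · rw [if_neg hi, Set.indicator_of_notMem (fun hc => hi hc.2)]
              rw [Finset.sum_congr rfl (fun i _ => e2 i)]
              have e3 : ∑ i : Fin n, (if c (m+1) < X i ω then (1:ℝ≥0∞) else 0)
                  = ((Finset.univ.filter fun i : Fin n => c (m+1) < X i ω).card : ℝ≥0∞) := by
                rw [Finset.card_filter]
                push_cast
                apply Finset.sum_congr rfl
                intro i _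
                split <;> simp
              rw [e3]
              have : (Finset.univ.filter fun i : Fin n => c (m+1) < X i ω).card = m + 1 := hNm
              rw [this]
            · rw [Set.indicator_of_notMem hω]
              apply Finset.sum_eq_zero
              intro i _
              exact Set.indicator_of_notMem (fun hc => hω hc.1) _
        _ = ((m+1:ℕ) : ℝ≥0∞) * μ A := by
            rw [lintegral_indicator hAmeas, setLIntegral_const]
    have hkeyR : ∑ i : Fin n, (μ (A ∩ S i (m+1))).toReal = ((m+1:ℕ):ℝ) * (μ A).toReal := by
      have := congrArg ENNReal.toReal hkey
      rw [ENNReal.toReal_mul, ENNReal.toReal_natCast] at this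
      rw [← this, ENNReal.toReal_sum (fun i _ => measure_ne_top μ _)]
    rw [h1, Finset.sum_congr rfl (fun i _ => h2 i), hkeyR]
  -- ratio hypothesis in working form
  have hrat : ∀ (i : Fin n) (m : ℕ), 1 ≤ m → m ≤ n → G i m / m ≤ G i n / n := by
    intro i m h1 h2
    rw [hGF, hGF]
    have hle : (⟨m-1, by omega⟩ : Fin n) ≤ (⟨n-1, by omega⟩ : Fin n) := by
      simp only [Fin.mk_le_mk]; omega
    have h := hratio i ⟨m-1, by omega⟩ ⟨n-1, by omega⟩ hle
    have e2 : ((m-1:ℕ):ℝ) + 1 = (m:ℝ) := by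
      rw [Nat.cast_sub h1]; ring
    have e3 : ((n-1:ℕ):ℝ) + 1 = (n:ℝ) := by
      rw [Nat.cast_sub hn]; ring
    have hcmv : c m = b ⟨n-1-(m-1), by omega⟩ := by
      rw [hceq m h1 h2 (by omega)]
      congr 1
      exact Fin.ext (by simp; omega)
    have hcnv : c n = b ⟨n-1-(n-1), by omega⟩ := by
      rw [hceq n hn le_rfl (by omega)]
      congr 1
      exact Fin.ext (by show n - n = n - 1 - (n-1); omega)
    rw [hcmv, hcnv, ← e2, ← e3]
    exact h
  -- step C : the per-(i,m) inequality
  have hstepC : ∀ (i : Fin n) (m : ℕ), m < n →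
      (1/((m+1:ℕ):ℝ)) * (P i (m+1) (m+1) - P i (m+1) m)
        ≤ (G i n / n) * (T i (m+1) - T i m) := by
    intro i m hmn
    by_cases hGm0 : G i (m+1) = 0
    · have hp1 : P i (m+1) (m+1) = 0 :=
        le_antisymm ((hPleG i (m+1) (m+1)).trans_eq hGm0) (hPnn i (m+1) (m+1))
      have hp2 : P i (m+1) m = 0 :=
        le_antisymm ((hPleG i (m+1) m).trans_eq hGm0) (hPnn i (m+1) m)
      have hT1 : T i (m+1) = 0 := by simp [hT, hGm0]
      have hT2 : T i m = 0 := by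
        rcases Nat.eq_zero_or_pos m with h | h
        · simp [hT, h]
        · have : G i m = 0 :=
            le_antisymm ((hGmono i (Nat.le_succ m)).trans_eq hGm0) (hGnn i m)
          simp [hT, this]
      rw [hp1, hp2, hT1, hT2]
      simp
    · have hGpos : 0 < G i (m+1) := lt_of_le_of_ne (hGnn i (m+1)) (Ne.symm hGm0)
      have hTm : T i (m+1) = P i (m+1) (m+1) / G i (m+1) := by
        rw [hT]
        simp only
        rw [if_neg (by push_neg; exact ⟨Nat.succ_ne_zero m, hGm0⟩)]
      have key1 : T i m ≤ P i (m+1) m / G i (m+1) := by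
        rcases Nat.eq_zero_or_pos m with h0 | h0
        · rw [h0]
          have : T i 0 = 0 := by simp [hT]
          rw [this]
          positivity
        · by_cases hGm0' : G i m = 0
          · have : T i m = 0 := by simp [hT, hGm0']
            rw [this]
            positivity
          · have hGpos' : 0 < G i m := lt_of_le_of_ne (hGnn i m) (Ne.symm hGm0')
            have hcr := hcross i m (Nat.le_succ m)
            have hTmm : T i m = P i m m / G i m := by
              rw [hT]
              simp only
              rw [if_neg (by push_neg; exact ⟨by omega, hGm0'⟩)]
            rw [hTmm, div_le_div_iff₀ hGpos' hGpos]
            linarith [hcr]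
      have hd : 0 ≤ P i (m+1) (m+1) - P i (m+1) m :=
        sub_nonneg.2 (hPmono i (m+1) (Nat.le_succ m))
      have h3 := hrat i (m+1) (by omega) (by omega)
      have h5 : 0 ≤ G i n / n := div_nonneg (hGnn i n) (Nat.cast_nonneg n)
      have hm1pos : (0:ℝ) < ((m+1:ℕ):ℝ) := by positivity
      have lhs_eq : (1/((m+1:ℕ):ℝ)) * (P i (m+1) (m+1) - P i (m+1) m)
          = (G i (m+1) / ((m+1:ℕ):ℝ)) * ((P i (m+1) (m+1) - P i (m+1) m) / G i (m+1)) := by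
        field_simp
      rw [lhs_eq, hTm]
      have hdd : 0 ≤ (P i (m+1) (m+1) - P i (m+1) m) / G i (m+1) := div_nonneg hd hGpos.le
      calc (G i (m+1) / ((m+1:ℕ):ℝ)) * ((P i (m+1) (m+1) - P i (m+1) m) / G i (m+1))
          ≤ (G i n / n) * ((P i (m+1) (m+1) - P i (m+1) m) / G i (m+1)) :=
            mul_le_mul_of_nonneg_right h3 hdd
        _ ≤ (G i n / n) * (P i (m+1) (m+1) / G i (m+1) - T i m) := by
            apply mul_le_mul_of_nonneg_left _ h5
            rw [sub_div]
            linarith [key1]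
  -- assembly
  have hEnm : (μ (E n)).toReal = 1 := by rw [hEn]; simp
  have htel : 1 - (μ (E 0)).toReal
      = ∑ m ∈ Finset.range n, ((μ (E (m+1))).toReal - (μ (E m)).toReal) := by
    rw [Finset.sum_range_sub (fun m => (μ (E m)).toReal), hEnm]
  have hstepB' : ∀ m ∈ Finset.range n,
      (μ (E (m+1))).toReal - (μ (E m)).toReal
        = ∑ i : Fin n, (1/((m+1:ℕ):ℝ)) * (P i (m+1) (m+1) - P i (m+1) m) := by
    intro m hm
    rw [Finset.mem_range] at hm
    have hB := hstepB m hm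
    have hm1pos : (0:ℝ) < ((m+1:ℕ):ℝ) := by positivity
    rw [← Finset.mul_sum, ← hB]
    field_simp
  have hmain : 1 - (μ (E 0)).toReal ≤ ∑ i : Fin n, G i n / n := by
    rw [htel, Finset.sum_congr rfl hstepB', Finset.sum_comm]
    apply Finset.sum_le_sum
    intro i _
    calc ∑ m ∈ Finset.range n, (1/((m+1:ℕ):ℝ)) * (P i (m+1) (m+1) - P i (m+1) m)
        ≤ ∑ m ∈ Finset.range n, (G i n / n) * (T i (m+1) - T i m) := by
          apply Finset.sum_le_sum
          intro m hm
          rw [Finset.mem_range] at hm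
          exact hstepC i m hm
      _ = (G i n / n) * (T i n - T i 0) := by
          rw [← Finset.mul_sum, Finset.sum_range_sub (T i)]
      _ ≤ G i n / n := by
          have hT0 : T i 0 = 0 := by simp [hT]
          have hTn : T i n ≤ 1 := by
            by_cases h : G i n = 0
            · simp [hT, h]
            · have hGpos : 0 < G i n := lt_of_le_of_ne (hGnn i n) (Ne.symm h)
              have : T i n = P i n n / G i n := by
                rw [hT]
                simp only
                rw [if_neg (by push_neg; exact ⟨by omega, h⟩)]
              rw [this, div_le_one hGpos]
              exact hPleG i n n
          have h5 : 0 ≤ G i n / n := div_nonneg (hGnn i n) (Nat.cast_nonneg n)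
          nlinarith [hTn, hT0, h5]
  -- final computation
  rw [hE0]
  have hGFn : ∀ i : Fin n, G i n = 1 - F i (b ⟨0, hn⟩) := by
    intro i
    rw [hGF i n, hceq n hn le_rfl (by omega)]
    have e : (⟨n - n, by omega⟩ : Fin n) = ⟨0, hn⟩ := Fin.ext (by show n - n = 0; omega)
    rw [e]
  have hsum : ∑ i : Fin n, G i n / n = ((n:ℝ) - ∑ i : Fin n, F i (b ⟨0,hn⟩)) / n := by
    rw [← Finset.sum_div]
    congr 1
    rw [Finset.sum_congr rfl (fun i _ => hGFn i), Finset.sum_sub_distrib]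
    simp [Finset.card_univ]
  rw [hsum] at hmain
  have hnpos : (0:ℝ) < n := by positivity
  rw [one_div, inv_mul_le_iff₀ hnpos]
  have h2 : (n:ℝ) * (1 - (μ (E 0)).toReal)
      ≤ (n:ℝ) * (((n:ℝ) - ∑ i : Fin n, F i (b ⟨0,hn⟩)) / n) :=
    mul_le_mul_of_nonneg_left hmain hnpos.le
  rw [mul_div_cancel₀ _ hnpos.ne'] at h2
  nlinarith [h2]
end

section
/- Let X_1, ..., X_n (n ≥ 2) be exchangeable real random variables with atomless joint distribution, let F_1 denote the common marginal CDF, and let a_1 ≤ ... ≤ a_n be reals. Then P(X_{1:n} ≥ a_1, ..., X_{n:n} ≥ a_n) = 1 − F_1(a_n)·n·(1/n) + Σ_{i=1}^n Σ_{r=2}^n E[ψ_r^{(i)} · (1{X_i ≤ a_r}/r − 1{X_i ≤ a_{r−1}}/(r−1))], where ψ_r^{(i)} = P(X^{−(i)}_{r−1:n−1} ≥ a_r, ..., X^{−(i)}_{n−1:n−1} ≥ a_n | X_i) and X^{−(i)}_{j:n−1} are the order statistics of (X_1,...,X_n) with X_i removed. Equivalently, P(X_{1:n} ≥ a_1, ...,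 X_{n:n} ≥ a_n) = 1 − F_1(a_n) + Σ_i Σ_{r=2}^n E[...]. -/
open MeasureTheory

section helpers
open Finset

/-- count of coordinates strictly below `t` -/
noncomputable def cnt {n : ℕ} (x : Fin n → ℝ) (t : ℝ) : ℕ :=
  #(univ.filter (fun l => x l < t))

lemma cnt_comp_equiv {n : ℕ} (x : Fin n → ℝ) (σ : Equiv.Perm (Fin n)) (t : ℝ) :
    cnt (x ∘ σ) t = cnt x t := by
  unfold cnt
  apply Finset.card_bij (fun l _ => σ l)
  · intro l hl; simpa using (Finset.mem_filter.mp hl).2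
  · intro l₁ _ l₂ _ h; exact σ.injective h
  · intro l hl
    exact ⟨σ.symm l, by simpa using (Finset.mem_filter.mp hl).2, by simp⟩

lemma monotone_filter_lt_eq {n : ℕ} {y : Fin n → ℝ} (hy : Monotone y) (t : ℝ) (j : Fin n) :
    y j < t ↔ (j : ℕ) < #(univ.filter (fun l => y l < t)) := by
  constructor
  · intro h
    have hsub : Finset.Iic j ⊆ univ.filter (fun l => y l < t) := by
      intro l hl
      simp only [Finset.mem_Iic] at hl
      exact Finset.mem_filter.mpr ⟨Finset.mem_univ _, lt_of_le_of_lt (hy hl) h⟩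
    calc (j : ℕ) < (j : ℕ) + 1 := Nat.lt_succ_self _
    _ = #(Finset.Iic j) := (Fin.card_Iic j).symm
    _ ≤ _ := Finset.card_le_card hsub
  · intro h
    by_contra hc
    have hsub : univ.filter (fun l => y l < t) ⊆ Finset.Iio j := by
      intro l hl
      have := (Finset.mem_filter.mp hl).2
      rw [Finset.mem_Iio]
      by_contra hlj
      exact hc (lt_of_le_of_lt (hy (le_of_not_gt hlj)) this)
    have := Finset.card_le_card hsub
    rw [Fin.card_Iio] at this
    omega

/-- key characterization: `t ≤ ordStat x j ↔ cnt x t ≤ j` -/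
lemma le_ordStat_iff {n : ℕ} (x : Fin n → ℝ) (t : ℝ) (j : Fin n) :
    t ≤ ordStat x j ↔ cnt x t ≤ (j : ℕ) := by
  have h1 := monotone_filter_lt_eq (Tuple.monotone_sort x) t j
  have h2 : cnt (x ∘ Tuple.sort x) t = cnt x t := cnt_comp_equiv x _ t
  unfold ordStat
  rw [← not_lt, h1, not_lt]
  unfold cnt at h2 ⊢
  rw [h2]

lemma cnt_succAbove {n : ℕ} (x : Fin (n + 1) → ℝ) (i : Fin (n + 1)) (t : ℝ) :
    cnt (x ∘ i.succAbove) t + (if x i < t then 1 else 0) = cnt x t := by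
  classical
  unfold cnt
  have himg : (univ.filter (fun l : Fin n => x (i.succAbove l) < t)).image i.succAbove
      = (univ.filter (fun j : Fin (n+1) => x j < t)).erase i := by
    ext j
    simp only [Finset.mem_image, Finset.mem_filter, Finset.mem_erase, Finset.mem_univ, true_and]
    constructor
    · rintro ⟨l, hl, rfl⟩; exact ⟨Fin.succAbove_ne i l, hl⟩
    · rintro ⟨hne, hj⟩
      obtain ⟨l, rfl⟩ := Fin.exists_succAbove_eq hne
      exact ⟨l, hj, rfl⟩
  have hcard : #(univ.filter (fun l : Fin n => x (i.succAbove l) < t))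
      = #((univ.filter (fun j : Fin (n+1) => x j < t)).erase i) := by
    rw [← himg, Finset.card_image_of_injective _ (Fin.succAbove_right_injective)]
  simp only [Function.comp]
  rw [hcard]
  by_cases hi : x i < t
  · rw [Finset.card_erase_of_mem (by simp [hi]), if_pos hi]
    have : 0 < #(univ.filter (fun j : Fin (n+1) => x j < t)) :=
      Finset.card_pos.mpr ⟨i, by simp [hi]⟩
    omega
  · rw [Finset.erase_eq_of_notMem (by simp [hi]), if_neg hi]
    simp

lemma measurable_cnt {Ω : Type*} [MeasurableSpace Ω] {k : ℕ} (Y : Fin k → Ω → ℝ)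
    (hY : ∀ l, Measurable (Y l)) (t : ℝ) :
    Measurable (fun ω => cnt (fun l => Y l ω) t) := by
  classical
  have h : (fun ω => cnt (fun l => Y l ω) t)
      = fun ω => ∑ l, if Y l ω < t then 1 else 0 :=
    funext fun ω => Finset.card_filter _ _
  rw [h]
  exact Finset.measurable_sum _ (fun l _ =>
    Measurable.ite (measurableSet_lt (hY l) measurable_const) measurable_const measurable_const)

lemma sum_measure_inter {Ω : Type*} [MeasurableSpace Ω] (μ : Measure Ω) {n : ℕ}
    (A : Fin n → Set Ω) (hA : ∀ i, MeasurableSet (A i)) (S : Set Ω) (hS : MeasurableSet S)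
    (k : ℕ) (hk : ∀ ω ∈ S, (∑ i, (A i).indicator (fun _ => (1 : ℕ)) ω) = k) :
    ∑ i, μ (S ∩ A i) = k * μ S := by
  classical
  have h1 : ∀ i, μ (S ∩ A i) = ∫⁻ ω in S, (A i).indicator (fun _ => (1 : ENNReal)) ω ∂μ := by
    intro i
    rw [lintegral_indicator (hA i), setLIntegral_one, Measure.restrict_apply (hA i),
      Set.inter_comm]
  calc ∑ i, μ (S ∩ A i)
      = ∑ i, ∫⁻ ω in S, (A i).indicator (fun _ => (1 : ENNReal)) ω ∂μ :=
        Finset.sum_congr rfl (fun i _ => h1 i)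
    _ = ∫⁻ ω in S, ∑ i, (A i).indicator (fun _ => (1 : ENNReal)) ω ∂μ :=
        (lintegral_finset_sum _ (fun i _ => measurable_const.indicator (hA i))).symm
    _ = ∫⁻ _ω in S, (k : ENNReal) ∂μ := by
        refine setLIntegral_congr_fun hS (fun ω hω => ?_)
        have : ∑ i, (A i).indicator (fun _ => (1 : ENNReal)) ω
            = ((∑ i, (A i).indicator (fun _ => (1 : ℕ)) ω : ℕ) : ENNReal) := by
          push_cast
          refine Finset.sum_congr rfl fun i _ => ?_
          by_cases h : ω ∈ A i <;> simp [h]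
        rw [this, hk ω hω]
    _ = k * μ S := by rw [setLIntegral_const]

lemma cnt_mono {n : ℕ} (x : Fin n → ℝ) {t t' : ℝ} (h : t ≤ t') : cnt x t ≤ cnt x t' := by
  apply Finset.card_le_card
  intro l hl
  simp only [Finset.mem_filter, Finset.mem_univ, true_and] at hl ⊢
  exact lt_of_lt_of_le hl h

lemma cnt_le {n : ℕ} (x : Fin n → ℝ) (t : ℝ) : cnt x t ≤ n := by
  calc cnt x t ≤ #(Finset.univ : Finset (Fin n)) := Finset.card_filter_le _ _
  _ = n := by simp

lemma one_le_cnt {n : ℕ} {x : Fin n → ℝ} {t : ℝ} {i : Fin n} (h : x i < t) : 1 ≤ cnt x t := by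
  unfold cnt
  exact Finset.card_pos.mpr ⟨i, by simp [h]⟩

lemma sum_indicator_lt_eq_cnt {Ω : Type*} {k : ℕ} (Y : Fin k → Ω → ℝ) (t : ℝ) (ω : Ω) :
    (∑ i, ({ω' | Y i ω' < t}).indicator (fun _ => (1 : ℕ)) ω) = cnt (fun l => Y l ω) t := by
  unfold cnt
  rw [Finset.card_filter]
  refine Finset.sum_congr rfl fun i _ => ?_
  by_cases h : Y i ω < t <;> simp [h, Set.indicator_apply]

end helpers

/-- The `k = 1` decomposition (3.1)/(2.3): for exchangeable `X_1, ..., X_n` (`n ≥ 2`,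
here `n = m + 2`) with atomless common marginal CDF `F₁` and `a_1 ≤ ⋯ ≤ a_n`,
`P(X_{1:n} ≥ a_1, ..., X_{n:n} ≥ a_n)
  = 1 − F₁(a_n) + Σ_{i=1}^n Σ_{r=2}^n E[ψ_r^{(i)} (1{X_i ≤ a_r}/r − 1{X_i ≤ a_{r−1}}/(r−1))]`,
where `ψ_r^{(i)} = P(X^{−(i)}_{r−1:n−1} ≥ a_r, ..., X^{−(i)}_{n−1:n−1} ≥ a_n | X_i)`.
The index `s : Fin (m+1)` encodes the one-based `r = s + 2`, so `a_r = a s.succ`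
and `a_{r−1} = a s.castSucc`. -/
theorem simes_decomposition_k_one
    {Ω : Type*} [MeasurableSpace Ω] {μ : Measure Ω} [IsProbabilityMeasure μ]
    {m : ℕ} (X : Fin (m + 2) → Ω → ℝ) (hmeas : ∀ i, Measurable (X i))
    (hexch : ∀ σ : Equiv.Perm (Fin (m + 2)),
      Measure.map (fun ω => fun i => X (σ i) ω) μ
        = Measure.map (fun ω => fun i => X i ω) μ)
    (hatomless : ∀ i (t : ℝ), μ {ω | X i ω = t} = 0)
    (F : ℝ → ℝ) (hcdf : ∀ t : ℝ, (μ {ω | X 0 ω ≤ t}).toReal = F t)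
    (a : Fin (m + 2) → ℝ) (ha : Monotone a)
    (ψ : Fin (m + 2) → Fin (m + 1) → Ω → ℝ)
    (hψ : ∀ (i : Fin (m + 2)) (s : Fin (m + 1)),
      ψ i s =
        μ[(fun ω => if ∀ j : Fin (m + 1), (s : ℕ) ≤ (j : ℕ) →
              a j.succ ≤ ordStat (fun l => X (i.succAbove l) ω) j
            then (1 : ℝ) else 0) |
          MeasurableSpace.comap (X i) (inferInstance : MeasurableSpace ℝ)]) :
    (μ {ω | ∀ i : Fin (m + 2), a i ≤ ordStat (fun j => X j ω) i}).toReal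
      = 1 - F (a (Fin.last (m + 1)))
        + ∑ i : Fin (m + 2), ∑ s : Fin (m + 1),
            ∫ ω, ψ i s ω *
              ((if X i ω ≤ a s.succ then (1 : ℝ) else 0) / ((s : ℕ) + 2)
                - (if X i ω ≤ a s.castSucc then (1 : ℝ) else 0) / ((s : ℕ) + 1)) ∂μ := by
  classical
  -- basic objects
  set C : Fin (m + 2) → Ω → ℕ := fun j ω => cnt (fun l => X l ω) (a j) with hC
  set B : ℕ → Set Ω := fun r => {ω | ∀ j : Fin (m + 2), r ≤ (j : ℕ) → C j ω ≤ (j : ℕ)} with hB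
  set A : Fin (m + 2) → Fin (m + 2) → Set Ω := fun j i => {ω | X i ω < a j} with hA
  set D : Fin (m + 2) → Fin (m + 1) → Set Ω := fun i s =>
    {ω | ∀ j : Fin (m + 1), (s : ℕ) ≤ (j : ℕ) →
      a j.succ ≤ ordStat (fun l => X (i.succAbove l) ω) j} with hD
  have hCmeas : ∀ j, Measurable (C j) := fun j => measurable_cnt X hmeas (a j)
  have hAmeas : ∀ j i, MeasurableSet (A j i) :=
    fun j i => measurableSet_lt (hmeas i) measurable_const
  have hBmeas : ∀ r, MeasurableSet (B r) := by
    intro r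
    have : B r = ⋂ j : Fin (m + 2), {ω | r ≤ (j : ℕ) → C j ω ≤ (j : ℕ)} := by
      ext ω; simp [hB, Set.mem_iInter]
    rw [this]
    refine MeasurableSet.iInter fun j => ?_
    by_cases hr : r ≤ (j : ℕ)
    · have : {ω | r ≤ (j : ℕ) → C j ω ≤ (j : ℕ)} = {ω | C j ω ≤ (j : ℕ)} := by
        ext ω; simp [hr]
      rw [this]
      exact (hCmeas j) (MeasurableSpace.measurableSet_top (s := {x : ℕ | x ≤ (j : ℕ)}))
    · have : {ω | r ≤ (j : ℕ) → C j ω ≤ (j : ℕ)} = Set.univ := by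
        ext ω; simp [hr]
      rw [this]; exact MeasurableSet.univ
  -- D is measurable
  have hDmeas : ∀ i s, MeasurableSet (D i s) := by
    intro i s
    have hre : D i s = ⋂ j : Fin (m + 1),
        {ω | (s : ℕ) ≤ (j : ℕ) → cnt (fun l => X (i.succAbove l) ω) (a j.succ) ≤ (j : ℕ)} := by
      ext ω
      simp only [hD, Set.mem_setOf_eq, Set.mem_iInter]
      exact forall_congr' fun j => imp_congr Iff.rfl (le_ordStat_iff _ _ _)
    rw [hre]
    refine MeasurableSet.iInter fun j => ?_
    by_cases hr : (s : ℕ) ≤ (j : ℕ)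
    · have : {ω | (s : ℕ) ≤ (j : ℕ) → cnt (fun l => X (i.succAbove l) ω) (a j.succ) ≤ (j : ℕ)}
          = {ω | cnt (fun l => X (i.succAbove l) ω) (a j.succ) ≤ (j : ℕ)} := by
        ext ω; simp [hr]
      rw [this]
      exact (measurable_cnt _ (fun l => hmeas _) _)
        (MeasurableSpace.measurableSet_top (s := {x : ℕ | x ≤ (j : ℕ)}))
    · have : {ω | (s : ℕ) ≤ (j : ℕ) → cnt (fun l => X (i.succAbove l) ω) (a j.succ) ≤ (j : ℕ)}
          = Set.univ := by
        ext ω; simp [hr]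
      rw [this]; exact MeasurableSet.univ
  -- goal set is B 0
  have hgoal : {ω | ∀ i : Fin (m + 2), a i ≤ ordStat (fun j => X j ω) i} = B 0 := by
    ext ω
    simp only [hB, Set.mem_setOf_eq]
    constructor
    · intro h j _
      exact (le_ordStat_iff _ _ _).mp (h j)
    · intro h i
      exact (le_ordStat_iff _ _ _).mpr (h i (Nat.zero_le _))
  -- key identity D ∩ {X i < t} = B (s+1) ∩ {X i < t}
  have hDB : ∀ (i : Fin (m + 2)) (s : Fin (m + 1)) (t : ℝ),
      (∀ j : Fin (m + 1), (s : ℕ) ≤ (j : ℕ) → t ≤ a j.succ) →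
      D i s ∩ {ω | X i ω < t} = B ((s : ℕ) + 1) ∩ {ω | X i ω < t} := by
    intro i s t hta
    ext ω
    simp only [Set.mem_inter_iff, Set.mem_setOf_eq, hD, hB]
    constructor
    · rintro ⟨h1, hx⟩
      refine ⟨?_, hx⟩
      intro J hJ
      have hJ0 : J ≠ 0 := by
        intro h0; rw [h0] at hJ; simp at hJ
      obtain ⟨j, rfl⟩ : ∃ j : Fin (m + 1), j.succ = J := ⟨J.pred hJ0, Fin.succ_pred J hJ0⟩
      have hsj : (s : ℕ) ≤ (j : ℕ) := by
        have := hJ; rw [Fin.val_succ] at this; omega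
      have hord := (le_ordStat_iff _ _ _).mp (h1 j hsj)
      have h2 := cnt_succAbove (fun l => X l ω) i (a j.succ)
      rw [if_pos (lt_of_lt_of_le hx (hta j hsj))] at h2
      have h3 : cnt (fun l => X (i.succAbove l) ω) (a j.succ)
          + 1 = cnt (fun l => X l ω) (a j.succ) := h2
      simp only [hC]
      rw [Fin.val_succ]
      omega
    · rintro ⟨h1, hx⟩
      refine ⟨?_, hx⟩
      intro j hsj
      rw [le_ordStat_iff]
      have h2 := cnt_succAbove (fun l => X l ω) i (a j.succ)
      rw [if_pos (lt_of_lt_of_le hx (hta j hsj))] at h2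
      have hmem := h1 j.succ (by rw [Fin.val_succ]; omega)
      simp only [hC] at hmem
      rw [Fin.val_succ] at hmem
      have h3 : cnt (fun l => X (i.succAbove l) ω) (a j.succ)
          + 1 = cnt (fun l => X l ω) (a j.succ) := h2
      omega
  -- atoms
  have hatom : ∀ (S : Set Ω) (i : Fin (m + 2)) (t : ℝ),
      μ (S ∩ {ω | X i ω ≤ t}) = μ (S ∩ {ω | X i ω < t}) := by
    intro S i t
    refine le_antisymm ?_ (measure_mono (Set.inter_subset_inter_right _ (Set.setOf_subset_setOf.mpr fun ω => le_of_lt)))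
    calc μ (S ∩ {ω | X i ω ≤ t})
        ≤ μ ((S ∩ {ω | X i ω < t}) ∪ {ω | X i ω = t}) := by
          refine measure_mono ?_
          rintro ω ⟨h1, (h2 : X i ω ≤ t)⟩
          rcases lt_or_eq_of_le h2 with h | h
          · exact Or.inl ⟨h1, h⟩
          · exact Or.inr h
      _ ≤ μ (S ∩ {ω | X i ω < t}) + μ {ω | X i ω = t} := measure_union_le _ _
      _ = μ (S ∩ {ω | X i ω < t}) := by rw [hatomless i t, add_zero]
  -- exchangeability: equal marginals
  have hmarg : ∀ (i : Fin (m + 2)) (t : ℝ), μ {ω | X i ω < t} = μ {ω | X 0 ω < t} := by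
    intro i t
    have h := hexch (Equiv.swap 0 i)
    have hmeas1 : Measurable (fun ω => fun j => X ((Equiv.swap 0 i) j) ω) :=
      measurable_pi_lambda _ fun j => hmeas _
    have hmeas2 : Measurable (fun ω => fun j : Fin (m + 2) => X j ω) :=
      measurable_pi_lambda _ fun j => hmeas _
    have hT : MeasurableSet {v : Fin (m + 2) → ℝ | v 0 < t} :=
      measurableSet_lt (measurable_pi_apply 0) measurable_const
    have h1 := congrArg (fun ν : Measure (Fin (m + 2) → ℝ) =>
      ν {v : Fin (m + 2) → ℝ | v 0 < t}) h
    rw [Measure.map_apply hmeas1 hT, Measure.map_apply hmeas2 hT] at h1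
    have : (fun ω => fun j => X ((Equiv.swap 0 i) j) ω) ⁻¹' {v : Fin (m + 2) → ℝ | v 0 < t}
        = {ω | X i ω < t} := by
      ext ω; simp [Equiv.swap_apply_left]
    rw [this] at h1
    have h2 : (fun ω => fun j : Fin (m + 2) => X j ω) ⁻¹' {v : Fin (m + 2) → ℝ | v 0 < t}
        = {ω | X 0 ω < t} := rfl
    rw [h2] at h1
    exact h1
  -- F at a_last
  have hF : F (a (Fin.last (m + 1))) = (μ {ω | X 0 ω < a (Fin.last (m + 1))}).toReal := by
    rw [← hcdf]
    congr 1
    have := hatom Set.univ 0 (a (Fin.last (m + 1)))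
    simpa using this
  -- conditional expectation per-term reduction
  have hterm : ∀ (i : Fin (m + 2)) (s : Fin (m + 1)),
      (∫ ω, ψ i s ω * ((if X i ω ≤ a s.succ then (1 : ℝ) else 0) / ((s : ℕ) + 2)
        - (if X i ω ≤ a s.castSucc then (1 : ℝ) else 0) / ((s : ℕ) + 1)) ∂μ)
      = (μ (B ((s : ℕ) + 1) ∩ {ω | X i ω < a s.succ})).toReal / ((s : ℕ) + 2)
        - (μ (B ((s : ℕ) + 1) ∩ {ω | X i ω < a s.castSucc})).toReal / ((s : ℕ) + 1) := by
    intro i s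
    set f : Ω → ℝ := (D i s).indicator (fun _ => (1 : ℝ)) with hf
    have hmem : ∀ ω, (ω ∈ D i s) ↔ (∀ j : Fin (m + 1), (s : ℕ) ≤ (j : ℕ) →
        a j.succ ≤ ordStat (fun l => X (i.succAbove l) ω) j) := by
      intro ω; simp only [hD, Set.mem_setOf_eq]
    have hfeq : (fun ω => if ∀ j : Fin (m + 1), (s : ℕ) ≤ (j : ℕ) →
          a j.succ ≤ ordStat (fun l => X (i.succAbove l) ω) j then (1 : ℝ) else 0) = f := by
      funext ω
      by_cases h : ∀ j : Fin (m + 1), (s : ℕ) ≤ (j : ℕ) →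
          a j.succ ≤ ordStat (fun l => X (i.succAbove l) ω) j
      · rw [if_pos h, hf, Set.indicator_of_mem ((hmem ω).mpr h)]
      · rw [if_neg h, hf, Set.indicator_of_notMem (fun hc => h ((hmem ω).mp hc))]
    have hm_le : MeasurableSpace.comap (X i) (inferInstance : MeasurableSpace ℝ) ≤ _ :=
      (hmeas i).comap_le
    have hfint : Integrable f μ := (integrable_const (1 : ℝ)).indicator (hDmeas i s)
    have hpsieq : ψ i s = μ[f | MeasurableSpace.comap (X i) inferInstance] := by
      rw [hψ i s, hfeq]
    have hpsiint : Integrable (ψ i s) μ := by rw [hpsieq]; exact integrable_condExp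
    have hsetint : ∀ t : ℝ, ∫ ω in {ω | X i ω ≤ t}, ψ i s ω ∂μ
        = (μ (D i s ∩ {ω | X i ω ≤ t})).toReal := by
      intro t
      have hAc : MeasurableSet[MeasurableSpace.comap (X i) inferInstance] {ω | X i ω ≤ t} :=
        ⟨Set.Iic t, measurableSet_Iic, rfl⟩
      rw [hpsieq, setIntegral_condExp hm_le hfint hAc, hf]
      rw [integral_indicator (hDmeas i s), setIntegral_const, measureReal_def,
        Measure.restrict_apply (hDmeas i s), smul_eq_mul, mul_one]
    have hAm1 : MeasurableSet {ω | X i ω ≤ a s.succ} :=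
      measurableSet_le (hmeas i) measurable_const
    have hAm2 : MeasurableSet {ω | X i ω ≤ a s.castSucc} :=
      measurableSet_le (hmeas i) measurable_const
    have hinteq : (fun ω => ψ i s ω * ((if X i ω ≤ a s.succ then (1 : ℝ) else 0) / ((s : ℕ) + 2)
        - (if X i ω ≤ a s.castSucc then (1 : ℝ) else 0) / ((s : ℕ) + 1)))
        = fun ω => ({ω | X i ω ≤ a s.succ}.indicator (ψ i s) ω) / ((s : ℕ) + 2)
          - ({ω | X i ω ≤ a s.castSucc}.indicator (ψ i s) ω) / ((s : ℕ) + 1) := by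
      funext ω
      by_cases h1 : X i ω ≤ a s.succ <;> by_cases h2 : X i ω ≤ a s.castSucc <;>
        simp only [Set.indicator_apply, Set.mem_setOf_eq, h1, h2, if_pos, if_neg,
          if_true, if_false, not_false_iff] <;> ring
    rw [hinteq, integral_sub ((hpsiint.indicator hAm1).div_const _)
      ((hpsiint.indicator hAm2).div_const _), integral_div, integral_div,
      integral_indicator hAm1, integral_indicator hAm2, hsetint, hsetint]
    have hta1 : ∀ j : Fin (m + 1), (s : ℕ) ≤ (j : ℕ) → a s.succ ≤ a j.succ := by
      intro j hj
      exact ha (by rw [Fin.le_def]; simp only [Fin.val_succ]; omega)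
    have hta2 : ∀ j : Fin (m + 1), (s : ℕ) ≤ (j : ℕ) → a s.castSucc ≤ a j.succ := by
      intro j hj
      exact ha (by rw [Fin.le_def]; simp only [Fin.val_succ, Fin.coe_castSucc]; omega)
    rw [hatom (D i s) i (a s.succ), hatom (D i s) i (a s.castSucc),
      hDB i s (a s.succ) hta1, hDB i s (a s.castSucc) hta2]
  -- rewrite the goal
  rw [hgoal]
  have hrw : ∀ i : Fin (m + 2), ∀ s : Fin (m + 1),
      (∫ ω, ψ i s ω * ((if X i ω ≤ a s.succ then (1 : ℝ) else 0) / ((s : ℕ) + 2)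
        - (if X i ω ≤ a s.castSucc then (1 : ℝ) else 0) / ((s : ℕ) + 1)) ∂μ)
      = (μ (B ((s : ℕ) + 1) ∩ {ω | X i ω < a s.succ})).toReal / ((s : ℕ) + 2)
        - (μ (B ((s : ℕ) + 1) ∩ {ω | X i ω < a s.castSucc})).toReal / ((s : ℕ) + 1) := hterm
  calc (μ (B 0)).toReal
      = 1 - F (a (Fin.last (m + 1)))
        + ((μ (B 0)).toReal - 1 + F (a (Fin.last (m + 1)))) := by ring
    _ = 1 - F (a (Fin.last (m + 1)))
        + ∑ i : Fin (m + 2), ∑ s : Fin (m + 1),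
            ∫ ω, ψ i s ω *
              ((if X i ω ≤ a s.succ then (1 : ℝ) else 0) / ((s : ℕ) + 2)
                - (if X i ω ≤ a s.castSucc then (1 : ℝ) else 0) / ((s : ℕ) + 1)) ∂μ := by
      congr 1
      simp only [hrw]
      rw [Finset.sum_comm]
      -- introduce the aggregated quantities
      set w : Fin (m + 2) → ℕ → ℝ :=
        fun j r => ∑ i, (μ (B r ∩ {ω | X i ω < a j})).toReal with hw
      have hsum1 : ∀ s : Fin (m + 1),
          (∑ i : Fin (m + 2),
            ((μ (B ((s : ℕ) + 1) ∩ {ω | X i ω < a s.succ})).toReal / ((s : ℕ) + 2)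
              - (μ (B ((s : ℕ) + 1) ∩ {ω | X i ω < a s.castSucc})).toReal / ((s : ℕ) + 1)))
          = w s.succ ((s : ℕ) + 1) / ((s : ℕ) + 2)
            - w s.castSucc ((s : ℕ) + 1) / ((s : ℕ) + 1) := by
        intro s
        rw [Finset.sum_sub_distrib, ← Finset.sum_div, ← Finset.sum_div]
      rw [Finset.sum_congr rfl fun s _ => hsum1 s]
      -- structural facts
      have hBtop : B (m + 2) = Set.univ := by
        ext ω
        simp only [hB, Set.mem_setOf_eq, Set.mem_univ, iff_true]
        intro j hj
        exact absurd hj (by have := j.isLt; omega)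
      have hCmono : ∀ (ω : Ω) (j j' : Fin (m + 2)), j ≤ j' → C j ω ≤ C j' ω := by
        intro ω j j' hjj
        exact cnt_mono _ (ha hjj)
      have hCle2 : ∀ (j : Fin (m + 2)) (ω : Ω), C j ω ≤ m + 2 := by
        intro j ω; exact cnt_le _ _
      -- key telescoping identity
      have hkey : ∀ r : Fin (m + 2), w r ((r : ℕ) + 1)
          = w r (r : ℕ) + (((r : ℕ) : ℝ) + 1)
            * ((μ (B ((r : ℕ) + 1))).toReal - (μ (B (r : ℕ))).toReal) := by
        intro r
        set S : Set Ω := B ((r : ℕ) + 1) ∩ {ω | ¬ C r ω ≤ (r : ℕ)} with hS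
        have hSm : MeasurableSet S := by
          refine (hBmeas _).inter ?_
          exact (hCmeas r) (MeasurableSpace.measurableSet_top (s := {x : ℕ | ¬ x ≤ (r : ℕ)}))
        have hBr_eq : B (r : ℕ) = B ((r : ℕ) + 1) ∩ {ω | C r ω ≤ (r : ℕ)} := by
          ext ω
          simp only [hB, Set.mem_setOf_eq, Set.mem_inter_iff]
          constructor
          · intro h; exact ⟨fun j hj => h j (by omega), h r le_rfl⟩
          · rintro ⟨h1, h2⟩ j hj
            rcases Nat.eq_or_lt_of_le hj with heq | hlt
            · have hjr : j = r := Fin.ext heq.symm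
              rw [hjr]; exact le_trans h2 (by omega)
            · exact h1 j (by omega)
        have hmeq : ∀ T : Set Ω, MeasurableSet T →
            μ (B ((r : ℕ) + 1) ∩ T) = μ (B (r : ℕ) ∩ T) + μ (S ∩ T) := by
          intro T hT
          have hunion : B ((r : ℕ) + 1) ∩ T = (B (r : ℕ) ∩ T) ∪ (S ∩ T) := by
            rw [hBr_eq, hS]
            ext ω
            by_cases hc : C r ω ≤ (r : ℕ) <;>
              simp only [Set.mem_inter_iff, Set.mem_union, Set.mem_setOf_eq, hc,
                not_true, not_false_iff, and_true, and_false, false_and, true_and,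
                false_or, or_false] <;> tauto
          have hdisj : Disjoint (B (r : ℕ) ∩ T) (S ∩ T) := by
            rw [Set.disjoint_left]
            rintro ω ⟨h1, _⟩ ⟨h2, _⟩
            rw [hBr_eq] at h1
            exact h2.2 h1.2
          rw [hunion, measure_union hdisj (hSm.inter hT)]
        have hCS : ∀ ω ∈ S, C r ω = (r : ℕ) + 1 := by
          rintro ω ⟨h1, h2⟩
          simp only [Set.mem_setOf_eq] at h2
          have hle : C r ω ≤ (r : ℕ) + 1 := by
            by_cases hrm : (r : ℕ) + 1 ≤ m + 1
            · have hj := h1 ⟨(r : ℕ) + 1, by omega⟩ (by simp)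
              exact le_trans
                (hCmono ω r ⟨(r : ℕ) + 1, by omega⟩ (by rw [Fin.le_def]; simp)) (by simpa using hj)
            · have := hCle2 r ω
              have hrval := r.isLt
              omega
          omega
        have hSsum : ∑ i, μ (S ∩ {ω | X i ω < a r}) = (((r : ℕ) + 1 : ℕ) : ENNReal) * μ S := by
          refine sum_measure_inter μ _ (fun i => measurableSet_lt (hmeas i) measurable_const)
            S hSm ((r : ℕ) + 1) (fun ω hω => ?_)
          rw [sum_indicator_lt_eq_cnt X (a r) ω]
          exact hCS ω hω
        have hμS : μ (B ((r : ℕ) + 1)) = μ (B (r : ℕ)) + μ S := by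
          have := hmeq Set.univ MeasurableSet.univ
          simpa using this
        have htr : ∀ U : Set Ω, (μ U) ≠ ⊤ := fun U => measure_ne_top μ U
        have hstep : ∀ i : Fin (m + 2),
            (μ (B ((r : ℕ) + 1) ∩ {ω | X i ω < a r})).toReal
            = (μ (B (r : ℕ) ∩ {ω | X i ω < a r})).toReal
              + (μ (S ∩ {ω | X i ω < a r})).toReal := by
          intro i
          rw [hmeq _ (measurableSet_lt (hmeas i) measurable_const),
            ENNReal.toReal_add (htr _) (htr _)]
        have hSsumR : ∑ i : Fin (m + 2), (μ (S ∩ {ω | X i ω < a r})).toReal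
            = (((r : ℕ) : ℝ) + 1) * (μ S).toReal := by
          rw [← ENNReal.toReal_sum (fun i _ => htr _), hSsum, ENNReal.toReal_mul,
            ENNReal.toReal_natCast]
          push_cast
          ring
        have hμSR : (μ (B ((r : ℕ) + 1))).toReal
            = (μ (B (r : ℕ))).toReal + (μ S).toReal := by
          rw [hμS, ENNReal.toReal_add (htr _) (htr _)]
        simp only [hw]
        rw [Finset.sum_congr rfl fun i _ => hstep i, Finset.sum_add_distrib, hSsumR]
        rw [hμSR]
        ring
      -- the two boundary values
      have hw0 : w 0 0 = 0 := by
        simp only [hw]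
        refine Finset.sum_eq_zero fun i _ => ?_
        have : B 0 ∩ {ω | X i ω < a 0} = ∅ := by
          ext ω
          simp only [hB, Set.mem_inter_iff, Set.mem_setOf_eq, Set.mem_empty_iff_false,
            iff_false, not_and]
          intro h1 h2
          have h3 := h1 0 (Nat.zero_le _)
          have h4 : 1 ≤ C (0 : Fin (m + 2)) ω := one_le_cnt h2
          simp at h3
          omega
        rw [this]
        simp
      have hwlast : w (Fin.last (m + 1)) (m + 2)
          = ((m : ℝ) + 2) * (μ {ω | X 0 ω < a (Fin.last (m + 1))}).toReal := by
        simp only [hw, hBtop, Set.univ_inter]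
        rw [Finset.sum_congr rfl fun i _ => by rw [hmarg i]]
        rw [Finset.sum_const, Finset.card_univ, Fintype.card_fin, nsmul_eq_mul]
        push_cast
        ring
      -- final telescoping
      set q : Fin (m + 2) → ℝ := fun r => w r (r : ℕ) / (((r : ℕ) : ℝ) + 1) with hq
      set v : Fin (m + 2) → ℝ := fun r => w r ((r : ℕ) + 1) / (((r : ℕ) : ℝ) + 1) with hv
      have hsummand : ∀ s : Fin (m + 1),
          w s.succ ((s : ℕ) + 1) / (((s : ℕ) : ℝ) + 2)
            - w s.castSucc ((s : ℕ) + 1) / (((s : ℕ) : ℝ) + 1)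
          = q s.succ - v s.castSucc := by
        intro s
        simp only [hq, hv, Fin.val_succ, Fin.coe_castSucc]
        push_cast
        ring
      rw [Finset.sum_congr rfl fun s _ => hsummand s, Finset.sum_sub_distrib]
      have e1 : ∑ s : Fin (m + 1), q s.succ = (∑ r : Fin (m + 2), q r) - q 0 := by
        rw [Fin.sum_univ_succ (f := q)]; ring
      have e2 : ∑ s : Fin (m + 1), v s.castSucc
          = (∑ r : Fin (m + 2), v r) - v (Fin.last (m + 1)) := by
        rw [Fin.sum_univ_castSucc (f := v)]; ring
      have htel : ∀ r : Fin (m + 2), v r - q r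
          = (μ (B ((r : ℕ) + 1))).toReal - (μ (B (r : ℕ))).toReal := by
        intro r
        have hc : (((r : ℕ) : ℝ) + 1) ≠ 0 := by positivity
        simp only [hq, hv]
        rw [hkey r]
        field_simp
        ring
      have e4 : (∑ r : Fin (m + 2), v r) - (∑ r : Fin (m + 2), q r)
          = 1 - (μ (B 0)).toReal := by
        rw [← Finset.sum_sub_distrib, Finset.sum_congr rfl fun r _ => htel r,
          Fin.sum_univ_eq_sum_range (fun k => (μ (B (k + 1))).toReal - (μ (B k)).toReal),
          Finset.sum_range_sub (fun k => (μ (B k)).toReal), hBtop]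
        simp [measure_univ]
      have hq0 : q 0 = 0 := by
        simp only [hq]
        rw [show ((0 : Fin (m + 2)) : ℕ) = 0 from rfl, hw0]
        simp
      have hvlast : v (Fin.last (m + 1)) = F (a (Fin.last (m + 1))) := by
        simp only [hv, Fin.val_last]
        rw [show m + 1 + 1 = m + 2 from rfl, hwlast, hF]
        have hne : ((m : ℝ) + 1 + 1) ≠ 0 := by positivity
        push_cast
        field_simp
        ring
      rw [e1, e2, hq0, hvlast]
      linarith [e4]
end
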